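/- Fix i, t ∈ ½ℤ and let D = ad(L_{i,i}^t, L_{−i+1,−i+1}^{−t}) : A → A be the left multiplication D(x) = [L_{i,i}^t, L_{−i+1,−i+1}^{−t}, x]. Then D is semisimple: every basis element L_{l,m}^r is an eigenvector of D with eigenvalue t(m−l), so A is the direct sum of the eigenspaces A(k,t) = span{L_{l,m}^r : t(m−l) = k}. Moreover, if t ≠ 0 then the kernel of D equals H = span{L_{j,j}^s : j, s ∈ ½ℤ}, and if t = 0 then D = 0. -/

import Mathlib

noncomputable section

/-- The half-integers `½ℤ = {k/2 : k ∈ ℤ}` as an additive subgroup of `ℚ`. -/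
def HalfInt : AddSubgroup ℚ where
  carrier := {q | ∃ k : ℤ, q = k / 2}
  add_mem' := by rintro a b ⟨k, rfl⟩ ⟨j, rfl⟩; exact ⟨k + j, by push_cast; ring⟩
  zero_mem' := ⟨0, by norm_num⟩
  neg_mem' := by rintro a ⟨k, rfl⟩; exact ⟨-k, by push_cast; ring⟩

/-- The half-integer `k/2`. -/
def hh (k : ℤ) : HalfInt := ⟨(k : ℚ) / 2, ⟨k, rfl⟩⟩

variable (F : Type*) [Field F] [CharZero F]

/-- `A` is the group algebra of `(½ℤ)³` over `F`; the basis element indexed by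
`(l, m, r)` is `L_{l,m}^r`. -/
abbrev A := AddMonoidAlgebra F (HalfInt × HalfInt × HalfInt)

/-- The basis element `L_{l,m}^r` of `A`. -/
def L (l m r : HalfInt) : A F := AddMonoidAlgebra.single (l, m, r) 1

/-- `M(α₁,α₂,α₃)`: the determinant of the 3×3 matrix with rows `(r₁,r₂,r₃)`,
`(l₁,l₂,l₃)`, `(m₁,m₂,m₃)`, computed in `ℚ` and mapped into `F`.
Here an index `α = (l, m, r)`. -/
def Mdet (α β γ : HalfInt × HalfInt × HalfInt) : F :=
  ((Matrix.det !![(α.2.2 : ℚ), (β.2.2 : ℚ), (γ.2.2 : ℚ);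
                  (α.1 : ℚ),   (β.1 : ℚ),   (γ.1 : ℚ);
                  (α.2.1 : ℚ), (β.2.1 : ℚ), (γ.2.1 : ℚ)] : ℚ) : F)

/-- The shift `ν = (1, 1, 0)` (in coordinates `(l, m, r)`). -/
def nu : HalfInt × HalfInt × HalfInt := (hh 2, hh 2, hh 0)

/-- The alternating trilinear bracket on `A`, determined on basis elements by
`[L_{l₁,m₁}^{r₁}, L_{l₂,m₂}^{r₂}, L_{l₃,m₃}^{r₃}]
  = M(α₁,α₂,α₃) · L_{l₁+l₂+l₃-1, m₁+m₂+m₃-1}^{r₁+r₂+r₃}`. -/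
def bracket (x y z : A F) : A F :=
  Finsupp.sum x.coeff fun α a => Finsupp.sum y.coeff fun β b => Finsupp.sum z.coeff fun γ c =>
    AddMonoidAlgebra.single (α + β + γ - nu) (a * b * c * Mdet F α β γ)

/-- The subspace `H` of `A` spanned by `{L_{j,j}^s : j, s ∈ ½ℤ}`. -/
def H (F : Type*) [Field F] [CharZero F] : Submodule F (A F) :=
  Submodule.span F {x : A F | ∃ j s : HalfInt, x = L F j j s}

/-- The eigenspace `A(k, t) = span{L_{l,m}^r : t(m−l) = k}`. -/
def eigSp (F : Type*) [Field F] [CharZero F] (t : HalfInt) (k : F) : Submodule F (A F) :=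
  Submodule.span F
    {x : A F | ∃ l m r : HalfInt,
      ((t : ℚ) : F) * (((m : ℚ) : F) - ((l : ℚ) : F)) = k ∧ x = L F l m r}

lemma det3 (a b d e f : ℚ) : (!![a, -a, d; b, 1-b, e; b, 1-b, f]).det = a * (f - e) := by
  simp [Matrix.det_fin_three, Matrix.vecHead, Matrix.vecTail]; ring

/-- eigenvalue function -/
def eig (t : HalfInt) (γ : HalfInt × HalfInt × HalfInt) : F :=
  ((t : ℚ) : F) * (((γ.2.1 : ℚ) : F) - ((γ.1 : ℚ) : F))

lemma bracket_eq (i t : HalfInt) (x : A F) :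
    bracket F (L F i i t) (L F (-i + hh 2) (-i + hh 2) (-t)) x
      = Finsupp.sum x.coeff fun γ c => AddMonoidAlgebra.single γ (c * eig F t γ) := by
  unfold bracket L
  simp only [AddMonoidAlgebra.coeff_single]
  rw [Finsupp.sum_single_index (by simp), Finsupp.sum_single_index (by simp)]
  refine Finsupp.sum_congr fun γ _ => ?_
  obtain ⟨l, m, r⟩ := γ
  have hidx : ((i,i,t) : HalfInt × HalfInt × HalfInt) + (-i + hh 2, -i + hh 2, -t) + (l,m,r) - nu
      = (l,m,r) := by
    simp only [nu, Prod.mk_add_mk, Prod.mk_sub_mk]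
    refine Prod.ext ?_ (Prod.ext ?_ ?_) <;>
      · apply Subtype.ext
        push_cast [hh]
        ring
  rw [hidx]
  congr 1
  have hdet : Mdet F (i,i,t) (-i + hh 2, -i + hh 2, -t) (l,m,r)
      = ((t : ℚ) : F) * (((m : ℚ) : F) - ((l : ℚ) : F)) := by
    unfold Mdet
    have h1 : ((-t : HalfInt) : ℚ) = -((t:HalfInt):ℚ) := rfl
    have h2 : ((-i + hh 2 : HalfInt) : ℚ) = 1 - (i:ℚ) := by push_cast [hh]; ring
    simp only [h1, h2, det3]
    push_cast
    ring
  rw [hdet, eig]; ring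

lemma bracket_apply (i t : HalfInt) (x : A F) (δ : HalfInt × HalfInt × HalfInt) :
    (bracket F (L F i i t) (L F (-i + hh 2) (-i + hh 2) (-t)) x).coeff δ = x.coeff δ * eig F t δ := by
  classical
  rw [bracket_eq, AddMonoidAlgebra.coeff_finsuppSum, Finsupp.sum_apply]
  simp only [AddMonoidAlgebra.coeff_single, Finsupp.single_apply]
  rw [Finsupp.sum_ite_eq']
  split_ifs with h
  · rfl
  · rw [Finsupp.notMem_support_iff.mp h, zero_mul]

lemma eigSp_eq (t : HalfInt) (k : F) :
    eigSp F t k = AddMonoidAlgebra.supported F F {γ | eig F t γ = k} := by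
  rw [AddMonoidAlgebra.supported_eq_span_single]
  unfold eigSp
  congr 1
  ext x
  constructor
  · rintro ⟨l, m, r, hk, rfl⟩
    exact ⟨(l, m, r), hk, rfl⟩
  · rintro ⟨⟨l, m, r⟩, hk, rfl⟩
    exact ⟨l, m, r, hk, rfl⟩

lemma H_eq : H F = AddMonoidAlgebra.supported F F {γ : HalfInt × HalfInt × HalfInt | γ.2.1 = γ.1} := by
  rw [AddMonoidAlgebra.supported_eq_span_single]
  unfold H
  congr 1
  ext x
  constructor
  · rintro ⟨j, s, rfl⟩
    exact ⟨(j, j, s), rfl, rfl⟩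
  · rintro ⟨⟨l, m, r⟩, hm, rfl⟩
    exact ⟨l, r, by cases hm; rfl⟩

lemma AMA_disjoint_supported_supported {s t : Set (HalfInt × HalfInt × HalfInt)}
    (h : Disjoint s t) :
    Disjoint (AddMonoidAlgebra.supported F F s) (AddMonoidAlgebra.supported F F t) := by
  rw [Submodule.disjoint_def]
  intro x h1 h2
  have := Submodule.disjoint_def.mp (Finsupp.disjoint_supported_supported (M := F) (R := F) h)
    x.coeff h1 h2
  exact AddMonoidAlgebra.coeff_eq_zero.mp this

/-- the left multiplication
`D = ad(L_{i,i}^t, L_{−i+1,−i+1}^{−t})` is semisimple: every basis element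
`L_{l,m}^r` is an eigenvector with eigenvalue `t(m−l)`, and `A` is the direct sum
of the eigenspaces `A(k,t)`.  Moreover if `t ≠ 0` then `ker D = H`, and if
`t = 0` then `D = 0`. -/
theorem ad_semisimple (i t : HalfInt) :
    (∀ l m r : HalfInt,
        bracket F (L F i i t) (L F (-i + hh 2) (-i + hh 2) (-t)) (L F l m r)
          = (((t : ℚ) : F) * (((m : ℚ) : F) - ((l : ℚ) : F))) • L F l m r)
      ∧ iSupIndep (fun k : F => eigSp F t k)
      ∧ (⨆ k : F, eigSp F t k) = ⊤
      ∧ (t ≠ 0 → ∀ x : A F,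
          bracket F (L F i i t) (L F (-i + hh 2) (-i + hh 2) (-t)) x = 0 ↔ x ∈ H F)
      ∧ (t = 0 → ∀ x : A F,
          bracket F (L F i i t) (L F (-i + hh 2) (-i + hh 2) (-t)) x = 0) := by
  have hb := bracket_eq F i t
  refine ⟨?_, ?_, ?_, ?_, ?_⟩
  · intro l m r
    rw [show L F l m r = AddMonoidAlgebra.single (l, m, r) (1 : F) from rfl, hb,
      AddMonoidAlgebra.coeff_single, Finsupp.sum_single_index (by simp)]
    show AddMonoidAlgebra.single ((l,m,r) : HalfInt × HalfInt × HalfInt) (1 * eig F t (l,m,r)) = _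
    unfold eig
    rw [AddMonoidAlgebra.smul_single', one_mul, mul_one]
  · intro k
    simp only [eigSp_eq]
    refine Disjoint.mono_right ?_
      (AMA_disjoint_supported_supported F
        (s := {γ | eig F t γ = k}) (t := {γ | eig F t γ ≠ k})
        (Set.disjoint_left.mpr fun γ h h' => h' h))
    refine iSup_le fun j => iSup_le fun hj => ?_
    exact AddMonoidAlgebra.supported_mono fun γ hγ => by
      simp only [Set.mem_setOf_eq] at hγ ⊢; rw [hγ]; exact hj
  · rw [eq_top_iff]
    intro x hx
    clear hx
    induction x using AddMonoidAlgebra.induction with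
    | zero => exact zero_mem _
    | single_add γ c f _ _ ih =>
      refine add_mem ?_ ih
      refine Submodule.mem_iSup_of_mem (eig F t γ) ?_
      rw [eigSp_eq]
      exact AddMonoidAlgebra.mem_supported.mpr
        ((Finsupp.mem_supported F _).mp (Finsupp.single_mem_supported F c rfl))
  · intro ht x
    have htF : ((t : ℚ) : F) ≠ 0 := by
      simp only [ne_eq, Rat.cast_eq_zero]
      exact fun h => ht (Subtype.ext h)
    rw [H_eq, AddMonoidAlgebra.mem_supported]
    constructor
    · intro h0 γ hγ
      have := bracket_apply F i t x γ
      rw [h0, AddMonoidAlgebra.coeff_zero, Finsupp.zero_apply] at this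
      have hx : x.coeff γ ≠ 0 := Finsupp.mem_support_iff.mp hγ
      have : eig F t γ = 0 := by
        rcases mul_eq_zero.mp this.symm with h | h
        · exact absurd h hx
        · exact h
      rw [eig] at this
      rcases mul_eq_zero.mp this with h | h
      · exact absurd h htF
      · have : ((γ.2.1 : ℚ) : F) = ((γ.1 : ℚ) : F) := sub_eq_zero.mp h
        exact Subtype.ext (by exact_mod_cast this)
    · intro hs
      ext γ
      rw [bracket_apply, AddMonoidAlgebra.coeff_zero, Finsupp.zero_apply]
      by_cases hγ : x.coeff γ = 0
      · rw [hγ, zero_mul]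
      · have : γ ∈ {γ : HalfInt × HalfInt × HalfInt | γ.2.1 = γ.1} :=
          hs (Finsupp.mem_support_iff.mpr hγ)
        have he : eig F t γ = 0 := by rw [eig, this]; ring
        rw [he, mul_zero]
  · intro ht x
    ext γ
    rw [bracket_apply, AddMonoidAlgebra.coeff_zero, Finsupp.zero_apply]
    have : eig F t γ = 0 := by rw [eig, ht]; simp
    rw [this, mul_zero]
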